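/- The infimum defining κ₀ is attained: there exists a finite nonempty strongly connected set S ⊂ ℤ with β_S = κ₀. Moreover, letting ε := min{α_i : α_i > 0}, m₀ be an integer ≥ max(L,R) such that every interval of m₀ consecutive integers is strongly connected in 𝒢, N be an integer with N·ε ≥ d⁺ + d⁻, and M := (N−1)·m₀, the infimum is attained by a strongly connected set of diameter at most M; in particular, by translation invariance, κ₀ = min{β_S : S ⊆ [0,M], S nonempty and strongly connected}. -/

import Mathlib

open MeasureTheory ProbabilityTheory Filter
open scoped ENNReal NNReal Classical

noncomputable section

/-- An environment on `ℤ`: a candidate family of transition probabilities. -/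
abbrev Env : Type := ℤ → ℤ → ℝ

/-- `ω` is a proper environment: each row is a probability vector on `ℤ`. -/
def IsEnv (ω : Env) : Prop :=
  (∀ x y, 0 ≤ ω x y) ∧ ∀ x, HasSum (ω x) 1

/-- `μ` is the quenched law `P_ω^x` of the Markov chain in environment `ω` started at `x`:
it is the probability measure on paths whose cylinder probabilities are the products of the
transition probabilities `ω`. -/
def IsQuenched (ω : Env) (x : ℤ) (μ : Measure (ℕ → ℤ)) : Prop :=
  IsProbabilityMeasure μ ∧
    ∀ (n : ℕ) (f : ℕ → ℤ),
      μ {X | ∀ i ≤ n, X i = f i} =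
        ENNReal.ofReal ((if f 0 = x then 1 else 0) *
          ∏ i ∈ Finset.range n, ω (f i) (f (i + 1)))

/-- `Pq` assigns to every proper environment `ω` and starting point `x` the quenched law
`P_ω^x`. -/
def IsQuenchedFamily (Pq : Env → ℤ → Measure (ℕ → ℤ)) : Prop :=
  ∀ ω, IsEnv ω → ∀ x, IsQuenched ω x (Pq ω x)

/-- The row of the environment at site `x`, as a function of the increment. -/
def rowOf (x : ℤ) (ω : Env) : ℤ → ℝ := fun i => ω x (x + i)

/-- Condition (C1): the rows `(ω(x, x+·))_{x ∈ ℤ}` are i.i.d. under `P`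
(and `P` is a probability measure on proper environments). -/
def CondIID (P : Measure Env) : Prop :=
  IsProbabilityMeasure P ∧ (∀ᵐ ω ∂P, IsEnv ω) ∧
    iIndepFun rowOf P ∧
    ∀ x : ℤ, P.map (rowOf x) = P.map (rowOf 0)

/-- The Markov chain given by `ω` is irreducible. -/
def IrreducibleEnv (ω : Env) : Prop :=
  ∀ x y : ℤ, ∃ (n : ℕ) (f : ℕ → ℤ), f 0 = x ∧ f n = y ∧ ∀ i < n, 0 < ω (f i) (f (i + 1))

/-- Condition (C2). -/
def CondIrred (P : Measure Env) : Prop := ∀ᵐ ω ∂P, IrreducibleEnv ω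

/-- Condition (C3): jumps lie in `[-L, R]`. -/
def CondBdd (L R : ℕ) (P : Measure Env) : Prop :=
  ∀ᵐ ω ∂P, ∀ a b : ℤ, (b - a < -(L : ℤ) ∨ (R : ℤ) < b - a) → ω a b = 0

/-- Condition (C4): for `P`-a.e. `ω`, the walk started at `0` tends to `+∞`, `P_ω^0`-a.s. -/
def CondTrans (P : Measure Env) (Pq : Env → ℤ → Measure (ℕ → ℤ)) : Prop :=
  ∀ᵐ ω ∂P, (Pq ω 0) {X | Tendsto X atTop atTop} = 1

/-- `v` is the annealed a.s. limiting velocity of the walk started at `0`. -/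
def ASLimVelocity (P : Measure Env) (Pq : Env → ℤ → Measure (ℕ → ℤ)) (v : ℝ) : Prop :=
  ∫⁻ ω, (Pq ω 0) {X | ¬ Tendsto (fun n : ℕ => (X n : ℝ) / (n : ℝ)) atTop (nhds v)} ∂P = 0

/-- `N_x`: number of visits of the path `X` to the site `x`. -/
def Ncount (x : ℤ) (X : ℕ → ℤ) : ℝ≥0∞ := ∑' n : ℕ, if X n = x then 1 else 0

/-- `N_x^S`: number of visits to `x` strictly before the first exit from `S`. -/
def NcountIn (S : Set ℤ) (x : ℤ) (X : ℕ → ℤ) : ℝ≥0∞ :=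
  ∑' n : ℕ, if X n = x ∧ ∀ m ≤ n, X m ∈ S then 1 else 0

/-- `N_{x,y}`: number of visits to `x` whose most recent preceding visit to `{x,y}` pattern
has the last visit to `y` after the last visit to `x` (number of trips from `y` to `x`). -/
def Ntrip (x y : ℤ) (X : ℕ → ℤ) : ℝ≥0∞ :=
  ∑' n : ℕ, if X n = x ∧ ∃ j < n, X j = y ∧ ∀ k < n, X k = x → k < j then 1 else 0

/-- `N'_{x,y}`: number of leftward crossings of `[x,y]`. -/
def NtripCross (x y : ℤ) (X : ℕ → ℤ) : ℝ≥0∞ :=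
  ∑' n : ℕ, if X n ≤ x ∧ ∃ j < n, y ≤ X j ∧ ∀ k < n, X k ≤ x → k < j then 1 else 0

/-- `H_{≥ z}`: hitting time of `[z, ∞)`, as an extended nonnegative real. -/
def Hge (z : ℤ) (X : ℕ → ℤ) : ℝ≥0∞ := sInf ((fun n : ℕ => (n : ℝ≥0∞)) '' {n | z ≤ X n})

/-- `H̃_x`: first positive hitting time of `x`, as an extended nonnegative real. -/
def Hret (x : ℤ) (X : ℕ → ℤ) : ℝ≥0∞ :=
  sInf ((fun n : ℕ => (n : ℝ≥0∞)) '' {n | 0 < n ∧ X n = x})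

/-- The Dirichlet distribution with parameters `(a j)_{j ∈ J}`, realized as the law of a
normalized vector of independent Gamma random variables, viewed as a measure on `ℤ → ℝ`
(coordinates outside `J` are `0`). -/
def dirichletRow (J : Finset ℤ) (a : ℤ → ℝ) : Measure (ℤ → ℝ) :=
  Measure.map (fun g : J → ℝ => fun i : ℤ =>
      if h : i ∈ J then g ⟨i, h⟩ / (∑ j : J, g j) else 0)
    (Measure.pi fun j : J => gammaMeasure (a (j : ℤ)) 1)

/-- The support of the weights. -/
def suppSet (L R : ℕ) (α : ℤ → ℝ) : Finset ℤ :=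
  (Finset.Icc (-(L : ℤ)) (R : ℤ)).filter fun i => 0 < α i

/-- `P = P_𝒢`: the rows are i.i.d. Dirichlet with parameters `(α_i)_{i : α_i > 0}`. -/
def IsDirichletLaw (L R : ℕ) (α : ℤ → ℝ) (P : Measure Env) : Prop :=
  IsProbabilityMeasure P ∧ (∀ᵐ ω ∂P, IsEnv ω) ∧
    iIndepFun rowOf P ∧
    ∀ x : ℤ, P.map (rowOf x) = dirichletRow (suppSet L R α) α

/-- `d⁺ = Σ_{i=1}^R i α_i`. -/
def dplus (R : ℕ) (α : ℤ → ℝ) : ℝ := ∑ i ∈ Finset.Icc (1 : ℤ) (R : ℤ), (i : ℝ) * α i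

/-- `d⁻ = Σ_{i=-L}^{-1} |i| α_i`. -/
def dminus (L : ℕ) (α : ℤ → ℝ) : ℝ :=
  ∑ i ∈ Finset.Icc (-(L : ℤ)) (-1 : ℤ), |(i : ℝ)| * α i

/-- `κ₁ = d⁺ - d⁻`. -/
def kappa1 (L R : ℕ) (α : ℤ → ℝ) : ℝ := dplus R α - dminus L α

/-- `S` is finite, nonempty and strongly connected in the graph `𝒢`. -/
def IsSC (α : ℤ → ℝ) (S : Finset ℤ) : Prop :=
  S.Nonempty ∧ ∀ x ∈ S, ∀ y ∈ S, ∃ (n : ℕ) (f : ℕ → ℤ),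
    f 0 = x ∧ f n = y ∧ (∀ i ≤ n, f i ∈ S) ∧ ∀ i < n, 0 < α (f (i + 1) - f i)

/-- `β_S`: total weight of edges of `𝒢` exiting `S`. -/
def betaExit (L R : ℕ) (α : ℤ → ℝ) (S : Finset ℤ) : ℝ :=
  ∑ x ∈ S, ∑ i ∈ Finset.Icc (-(L : ℤ)) (R : ℤ), if x + i ∉ S then α i else 0

/-- `κ₀`: infimum of `β_S` over finite nonempty strongly connected `S`. -/
def kappa0 (L R : ℕ) (α : ℤ → ℝ) : ℝ :=
  sInf {b : ℝ | ∃ S : Finset ℤ, IsSC α S ∧ betaExit L R α S = b}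

/-- Regeneration times `τ_k`. -/
def regenTime (X : ℕ → ℤ) : ℕ → ℕ
  | 0 => 0
  | k + 1 => sInf {n : ℕ | regenTime X k < n ∧ (∀ j < n, X j < X n) ∧ ∀ j, n < j → X n ≤ X j}

/-- Cascades: one (stopped) walk attached to each site of `ℤ`. -/
abbrev Casc : Type := ℤ → ℕ → ℤ

/-- The index `k` of the level `((k-1)R, kR]` containing `x`, i.e. `⌈x/R⌉`. -/
def levelIdx (R : ℕ) (x : ℤ) : ℤ := -(Int.ediv (-x) (R : ℤ))

/-- First hitting time of the level of `a + R` by the path `Y`. -/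
def levelHit (R : ℕ) (a : ℤ) (Y : ℕ → ℤ) : ℕ :=
  sInf {n : ℕ | levelIdx R (Y n) = levelIdx R (a + (R : ℤ))}

/-- The path `Y` stopped upon first reaching the level of `a + R`. -/
def stopWalk (R : ℕ) (a : ℤ) (Y : ℕ → ℤ) : ℕ → ℤ := fun n => Y (min n (levelHit R a Y))

/-- `μ` is the law of the cascade in the environment `ω`: independent coordinates, the
coordinate at `a` being a walk of law `P_ω^a` stopped upon first reaching the level of `a+R`. -/
def IsCascadeLaw (R : ℕ) (Pq : Env → ℤ → Measure (ℕ → ℤ)) (ω : Env) (μ : Measure Casc) :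
    Prop :=
  IsProbabilityMeasure μ ∧
    iIndepFun (fun a (c : Casc) => c a) μ ∧
    ∀ a : ℤ, μ.map (fun c => c a) = (Pq ω a).map (stopWalk R a)

/-- Bookkeeping for concatenation of the cascade walks: starting site and starting time of the
`k`-th stopped walk entering the concatenated walk from `a`. -/
def concatData (R : ℕ) (c : Casc) (a : ℤ) : ℕ → ℤ × ℕ
  | 0 => (a, 0)
  | k + 1 =>
      let p := concatData R c a k
      (c p.1 (levelHit R p.1 (c p.1)), p.2 + levelHit R p.1 (c p.1))

/-- The concatenated walk `X^a` of the cascade `c`. -/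
def Xconcat (R : ℕ) (c : Casc) (a : ℤ) (n : ℕ) : ℤ :=
  c (concatData R c a (sInf {k : ℕ | n < (concatData R c a (k + 1)).2})).1
    (n - (concatData R c a (sInf {k : ℕ | n < (concatData R c a (k + 1)).2})).2)

/-- The coalescence event `C_x`: every walk of the cascade started in the level of `x - R`
first hits the level of `x` at `x`. -/
def Coal (R : ℕ) (c : Casc) (x : ℤ) : Prop :=
  ∀ a : ℤ, levelIdx R a = levelIdx R (x - (R : ℤ)) → c a (levelHit R a (c a)) = x

/-- The event `ℰ₁`: all concatenated walks tend to `+∞`, all jumps lie in `[-L, R]`, and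
coalescence events occur at infinitely many sites to the left and to the right of `0`. -/
def CascEvent (L R : ℕ) (c : Casc) : Prop :=
  (∀ a : ℤ, Tendsto (Xconcat R c a) atTop atTop) ∧
    (∀ (a : ℤ) (n : ℕ), -(L : ℤ) ≤ c a (n + 1) - c a n ∧ c a (n + 1) - c a n ≤ (R : ℤ)) ∧
    (∀ M : ℤ, ∃ x : ℤ, x < M ∧ Coal R c x) ∧
    (∀ M : ℤ, ∃ x : ℤ, M < x ∧ Coal R c x)

/-- `N̄_0`: the time spent at `0` by the bi-infinite walk `X̄`, realized as the limit (here: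
`limsup`) as `a → -∞` of the time spent at `0` by the concatenated walk `X^a`. -/
def NbarZero (R : ℕ) (c : Casc) : ℝ≥0∞ :=
  Filter.limsup (fun a : ℤ => Ncount 0 (Xconcat R c a)) Filter.atBot

end

noncomputable section

lemma isSC_singleton (α : ℤ → ℝ) (x : ℤ) : IsSC α {x} := by
  refine ⟨Finset.singleton_nonempty x, ?_⟩
  intro a ha b hb
  simp only [Finset.mem_singleton] at ha hb
  exact ⟨0, fun _ => a, rfl, by rw [ha, hb], fun i _ => by simp [ha],
    fun i hi => absurd hi (Nat.not_lt_zero i)⟩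

lemma isSC_image_add (α : ℤ → ℝ) (S : Finset ℤ) (c : ℤ) (h : IsSC α S) :
    IsSC α (S.image (· + c)) := by
  refine ⟨h.1.image _, ?_⟩
  intro x hx y hy
  simp only [Finset.mem_image] at hx hy
  obtain ⟨x', hx', rfl⟩ := hx
  obtain ⟨y', hy', rfl⟩ := hy
  obtain ⟨n, f, hf0, hfn, hfS, hstep⟩ := h.2 x' hx' y' hy'
  refine ⟨n, fun i => f i + c, by simp [hf0], by simp [hfn], fun i hi =>
    Finset.mem_image.2 ⟨f i, hfS i hi, rfl⟩, fun i hi => ?_⟩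
  have : f (i + 1) + c - (f i + c) = f (i + 1) - f i := by ring
  rw [this]; exact hstep i hi

lemma mem_image_add (S : Finset ℤ) (c t : ℤ) : t + c ∈ S.image (· + c) ↔ t ∈ S := by
  simp [Finset.mem_image]

lemma betaExit_image_add (L R : ℕ) (α : ℤ → ℝ) (S : Finset ℤ) (c : ℤ) :
    betaExit L R α (S.image (· + c)) = betaExit L R α S := by
  unfold betaExit
  rw [Finset.sum_image (by intro a _ b _ h; simpa using h)]
  refine Finset.sum_congr rfl fun x _ => Finset.sum_congr rfl fun i _ => ?_
  have h1 : x + c + i = (x + i) + c := by ring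
  rw [h1]
  by_cases hm : x + i ∈ S
  · rw [if_neg (by simp [mem_image_add, hm]), if_neg (by simp [hm])]
  · rw [if_pos (by simp [mem_image_add, hm]), if_pos (by simp [hm])]

lemma count_ge (S : Finset ℤ) (i : ℤ) (hi : i ≠ 0) (c : ℤ)
    (hc : ∀ j : ℕ, j < i.natAbs → c + (j : ℤ) ∈ S) (w : ℝ) (hw : 0 ≤ w) :
    (i.natAbs : ℝ) * w ≤ ∑ x ∈ S, if x + i ∉ S then w else 0 := by
  have hex : ∀ j : Fin i.natAbs, ∃ x, x ∈ S ∧ i ∣ (x - (c + (j : ℤ))) ∧ x + i ∉ S := by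
    intro j
    set T := S.filter (fun x => i ∣ (x - (c + (j : ℤ)))) with hT
    have hTne : T.Nonempty := ⟨c + (j : ℤ), Finset.mem_filter.2 ⟨hc j j.2, by simp⟩⟩
    have hmemT : ∀ x, x ∈ T → x ∈ S ∧ i ∣ (x - (c + (j : ℤ))) := by
      intro x hx; exact Finset.mem_filter.1 hx
    have hinT : ∀ x, x ∈ T → x + i ∈ S → x + i ∈ T := by
      intro x hx hxi
      refine Finset.mem_filter.2 ⟨hxi, ?_⟩
      have := (hmemT x hx).2
      have h2 : x + i - (c + (j:ℤ)) = (x - (c + (j:ℤ))) + i := by ring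
      rw [h2]; exact dvd_add this dvd_rfl
    rcases lt_or_gt_of_ne hi with hneg | hpos
    · refine ⟨T.min' hTne, (hmemT _ (T.min'_mem hTne)).1, (hmemT _ (T.min'_mem hTne)).2, ?_⟩
      intro hmem
      have := T.min'_le _ (hinT _ (T.min'_mem hTne) hmem)
      omega
    · refine ⟨T.max' hTne, (hmemT _ (T.max'_mem hTne)).1, (hmemT _ (T.max'_mem hTne)).2, ?_⟩
      intro hmem
      have := T.le_max' _ (hinT _ (T.max'_mem hTne) hmem)
      omega
  choose f hfS hfd hfn using hex
  have hinj : Function.Injective f := by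
    intro j j' h
    have d1 := hfd j
    have d2 := hfd j'
    rw [h] at d1
    have hd : i ∣ ((j' : ℤ) - (j : ℤ)) := by
      have := dvd_sub d1 d2
      have h3 : f j' - (c + (j:ℤ)) - (f j' - (c + (j':ℤ))) = (j' : ℤ) - (j : ℤ) := by ring
      rwa [h3] at this
    have hj := j.2; have hj' := j'.2
    have : (j' : ℤ) - (j : ℤ) = 0 :=
      Int.eq_zero_of_dvd_of_natAbs_lt_natAbs hd (by omega)
    have : (j : ℕ) = (j' : ℕ) := by omega
    exact Fin.ext this
  calc (i.natAbs : ℝ) * w = ∑ _j : Fin i.natAbs, w := by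
        rw [Finset.sum_const, Finset.card_univ, Fintype.card_fin]; simp [mul_comm]
    _ = ∑ x ∈ Finset.univ.image f, (if x + i ∉ S then w else 0) := by
        rw [Finset.sum_image (fun a _ b _ h => hinj h)]
        refine Finset.sum_congr rfl fun j _ => ?_
        rw [if_pos (hfn j)]
    _ ≤ ∑ x ∈ S, if x + i ∉ S then w else 0 := by
        refine Finset.sum_le_sum_of_subset_of_nonneg ?_ ?_
        · intro x hx
          obtain ⟨j, _, rfl⟩ := Finset.mem_image.1 hx
          exact hfS j
        · intro x _ _; split <;> simp [hw]

lemma sum_abs_split (L R : ℕ) (hL : 1 ≤ L) (hR : 1 ≤ R) (α : ℤ → ℝ) :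
    ∑ i ∈ Finset.Icc (-(L : ℤ)) (R : ℤ), |(i : ℝ)| * α i = dminus L α + dplus R α := by
  have hset : Finset.Icc (-(L : ℤ)) (R : ℤ) =
      Finset.Icc (-(L : ℤ)) (-1 : ℤ) ∪ Finset.Icc (0 : ℤ) (R : ℤ) := by
    ext x; simp only [Finset.mem_Icc, Finset.mem_union]; omega
  have hdisj : Disjoint (Finset.Icc (-(L : ℤ)) (-1 : ℤ)) (Finset.Icc (0 : ℤ) (R : ℤ)) := by
    rw [Finset.disjoint_left]; intro x hx hx'
    simp only [Finset.mem_Icc] at hx hx'; omega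
  rw [hset, Finset.sum_union hdisj]
  congr 1
  have hset2 : Finset.Icc (0 : ℤ) (R : ℤ) = insert (0 : ℤ) (Finset.Icc (1 : ℤ) (R : ℤ)) := by
    ext x; simp only [Finset.mem_Icc, Finset.mem_insert]; omega
  rw [hset2, Finset.sum_insert (by simp)]
  simp only [Int.cast_zero, abs_zero, zero_mul, zero_add]
  refine Finset.sum_congr rfl fun i hi => ?_
  simp only [Finset.mem_Icc] at hi
  have h0 : (0:ℤ) ≤ i := by omega
  rw [abs_of_nonneg (by exact_mod_cast h0 : (0:ℝ) ≤ (i:ℝ))]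

lemma beta_interval_le (L R : ℕ) (hL : 1 ≤ L) (hR : 1 ≤ R) (α : ℤ → ℝ) (hα0 : ∀ i, 0 ≤ α i)
    (a b : ℤ) : betaExit L R α (Finset.Icc a b) ≤ dminus L α + dplus R α := by
  rw [← sum_abs_split L R hL hR α]
  unfold betaExit
  rw [Finset.sum_comm]
  refine Finset.sum_le_sum fun i _ => ?_
  rw [← Finset.sum_filter, Finset.sum_const, nsmul_eq_mul]
  have habs : |(i:ℝ)| = (i.natAbs : ℝ) := by
    rw [Nat.cast_natAbs, Int.cast_abs]
  rw [habs]
  have hcard : ((Finset.Icc a b).filter (fun x => x + i ∉ Finset.Icc a b)).card ≤ i.natAbs := by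
    rcases lt_trichotomy i 0 with h | h | h
    · have hsub : (Finset.Icc a b).filter (fun x => x + i ∉ Finset.Icc a b) ⊆
          Finset.Icc a (a - i - 1) := by
        intro x hx
        simp only [Finset.mem_filter, Finset.mem_Icc, not_and, not_le] at hx
        exact Finset.mem_Icc.2 (by omega)
      refine le_trans (Finset.card_le_card hsub) ?_
      rw [Int.card_Icc]; omega
    · subst h
      rw [Finset.filter_false_of_mem (fun x hx => by simpa using hx)]
      simp
    · have hsub : (Finset.Icc a b).filter (fun x => x + i ∉ Finset.Icc a b) ⊆
          Finset.Icc (b - i + 1) b := by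
        intro x hx
        simp only [Finset.mem_filter, Finset.mem_Icc, not_and, not_le] at hx
        exact Finset.mem_Icc.2 (by omega)
      refine le_trans (Finset.card_le_card hsub) ?_
      rw [Int.card_Icc]; omega
  have := hα0 i
  calc (((Finset.Icc a b).filter (fun x => x + i ∉ Finset.Icc a b)).card : ℝ) * α i
      ≤ (i.natAbs : ℝ) * α i := by
        apply mul_le_mul_of_nonneg_right _ this
        exact_mod_cast hcard

lemma dd_le_beta (L R m₀ : ℕ) (hL : 1 ≤ L) (hR : 1 ≤ R) (hm : max L R ≤ m₀)
    (α : ℤ → ℝ) (hα0 : ∀ i, 0 ≤ α i) (S : Finset ℤ) (c : ℤ)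
    (hc : Finset.Icc c (c + (m₀ : ℤ) - 1) ⊆ S) :
    dminus L α + dplus R α ≤ betaExit L R α S := by
  rw [← sum_abs_split L R hL hR α]
  unfold betaExit
  rw [Finset.sum_comm]
  refine Finset.sum_le_sum fun i hi => ?_
  have habs : |(i:ℝ)| = (i.natAbs : ℝ) := by rw [Nat.cast_natAbs, Int.cast_abs]
  rcases eq_or_ne i 0 with rfl | hi0
  · simp only [Int.cast_zero, abs_zero, zero_mul]
    exact Finset.sum_nonneg fun x _ => by split <;> simp [hα0]
  rcases eq_or_lt_of_le (hα0 i) with hz | hpos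
  · rw [← hz]
    simp only [mul_zero]
    exact Finset.sum_nonneg fun x _ => by split <;> simp [← hz]
  · rw [habs]
    refine count_ge S i hi0 c ?_ (α i) (hα0 i)
    intro j hj
    apply hc
    have hiL : -(L:ℤ) ≤ i := (Finset.mem_Icc.1 hi).1
    have hiR : i ≤ (R:ℤ) := (Finset.mem_Icc.1 hi).2
    have hLm : L ≤ m₀ := le_trans (le_max_left _ _) hm
    have hRm : R ≤ m₀ := le_trans (le_max_right _ _) hm
    refine Finset.mem_Icc.2 ⟨by omega, ?_⟩
    have : (j:ℤ) < i.natAbs := by exact_mod_cast hj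
    omega

lemma reach_lemma (L R m₀ : ℕ) (α : ℤ → ℝ)
    (hsupp : ∀ i : ℤ, (i < -(L : ℤ) ∨ (R : ℤ) < i) → α i = 0)
    (hm : R ≤ m₀) (hm1 : 1 ≤ m₀) (S : Finset ℤ) (hS : IsSC α S)
    (a b z : ℤ) (ha : a ∈ S) (hb : b ∈ S) (hz1 : a ≤ z) (hz2 : z ≤ b) :
    ∃ x ∈ S, z ≤ x ∧ x ≤ z + (m₀ : ℤ) - 1 := by
  obtain ⟨n, f, hf0, hfn, hfS, hstep⟩ := hS.2 a ha b hb
  have hex : ∃ j, j ≤ n ∧ z ≤ f j := ⟨n, le_refl _, by rw [hfn]; exact hz2⟩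
  set j := Nat.find hex with hj
  obtain ⟨hjn, hjz⟩ := Nat.find_spec hex
  rw [← hj] at hjn hjz
  rcases Nat.eq_zero_or_pos j with h0 | hpos
  · refine ⟨a, ha, ?_, ?_⟩
    · rw [h0] at hjz; rw [hf0] at hjz; omega
    · have hm1' : (1:ℤ) ≤ (m₀:ℤ) := by exact_mod_cast hm1
      omega
  · have hprev := Nat.find_min hex (show j - 1 < j by omega)
    have hj1n : j - 1 ≤ n := by omega
    have h1 : f (j - 1) < z := by
      by_contra hcon
      exact hprev ⟨hj1n, by omega⟩
    have hsj := hstep (j - 1) (by omega)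
    have hjj : j - 1 + 1 = j := by omega
    rw [hjj] at hsj
    have hd : f j - f (j - 1) ≤ (R:ℤ) := by
      by_contra hcon
      have := hsupp (f j - f (j-1)) (Or.inr (by omega))
      rw [this] at hsj
      exact lt_irrefl 0 hsj
    have hRm : (R:ℤ) ≤ (m₀:ℤ) := by exact_mod_cast hm
    exact ⟨f j, hfS j hjn, hjz, by omega⟩

lemma exit_edge (α : ℤ → ℝ) (B S : Finset ℤ) (hB : IsSC α B) (x z : ℤ)
    (hxS : x ∈ S) (hxB : x ∈ B) (hzB : z ∈ B) (hzS : z ∉ S) :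
    ∃ u v : ℤ, u ∈ S ∧ u ∈ B ∧ v ∈ B ∧ v ∉ S ∧ 0 < α (v - u) := by
  obtain ⟨n, f, hf0, hfn, hfB, hstep⟩ := hB.2 x hxB z hzB
  have hex : ∃ j, j ≤ n ∧ f j ∉ S := ⟨n, le_refl _, by rw [hfn]; exact hzS⟩
  set j := Nat.find hex with hj
  obtain ⟨hjn, hjS⟩ := Nat.find_spec hex
  rw [← hj] at hjn hjS
  have hpos : 0 < j := by
    rcases Nat.eq_zero_or_pos j with h0 | h; · rw [h0, hf0] at hjS; exact absurd hxS hjS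
    · exact h
  have hprev := Nat.find_min hex (show j - 1 < j by omega)
  have hj1n : j - 1 ≤ n := by omega
  have huS : f (j - 1) ∈ S := by
    by_contra hcon
    exact hprev ⟨hj1n, hcon⟩
  have hsj := hstep (j - 1) (by omega)
  have hjj : j - 1 + 1 = j := by omega
  rw [hjj] at hsj
  exact ⟨f (j - 1), f j, huS, hfB _ hj1n, hfB _ hjn, hjS, hsj⟩


/-- The infimum defining κ₀ is attained; moreover, with ε the least positive weight, m₀ an
integer ≥ max(L,R) such that every interval of m₀ consecutive integers is strongly connected,
and N an integer with N·ε ≥ d⁺ + d⁻, it is attained by a strongly connected subset of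
[0, (N-1)·m₀]. -/
theorem kappa0_attained
    (L R : ℕ) (hL : 1 ≤ L) (hR : 1 ≤ R)
    (α : ℤ → ℝ) (hα0 : ∀ i, 0 ≤ α i)
    (hαL : 0 < α (-(L : ℤ))) (hαR : 0 < α (R : ℤ))
    (hsupp : ∀ i : ℤ, (i < -(L : ℤ) ∨ (R : ℤ) < i) → α i = 0)
    (hgcd : ∀ d : ℕ, (∀ i : ℤ, 0 < α i → (d : ℤ) ∣ i) → d = 1)
    (ε : ℝ) (hε : IsLeast {r : ℝ | ∃ i : ℤ, 0 < α i ∧ α i = r} ε)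
    (m₀ : ℕ) (hm₀ : max L R ≤ m₀)
    (hm₀SC : ∀ a : ℤ, IsSC α (Finset.Icc a (a + (m₀ : ℤ) - 1)))
    (N : ℕ) (hN : dplus R α + dminus L α ≤ (N : ℝ) * ε) :
    (∃ S : Finset ℤ, IsSC α S ∧ betaExit L R α S = kappa0 L R α) ∧
    (∃ S : Finset ℤ, S ⊆ Finset.Icc (0 : ℤ) (((N - 1) * m₀ : ℕ) : ℤ) ∧
      IsSC α S ∧ betaExit L R α S = kappa0 L R α) := by
  set Mz : ℤ := (((N - 1) * m₀ : ℕ) : ℤ) with hMz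
  set F := (Finset.Icc (0:ℤ) Mz).powerset.filter (fun S => IsSC α S) with hF
  have hMz0 : 0 ≤ Mz := Int.ofNat_nonneg _
  have hFne : F.Nonempty := by
    refine ⟨{0}, Finset.mem_filter.2 ⟨Finset.mem_powerset.2 ?_, isSC_singleton α 0⟩⟩
    intro x hx
    rw [Finset.mem_singleton] at hx
    subst hx
    exact Finset.mem_Icc.2 ⟨le_refl _, hMz0⟩
  obtain ⟨S₀, hS₀F, hS₀min⟩ := F.exists_min_image (betaExit L R α) hFne
  have hS₀sub : S₀ ⊆ Finset.Icc (0:ℤ) Mz := Finset.mem_powerset.1 (Finset.mem_filter.1 hS₀F).1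
  have hS₀SC : IsSC α S₀ := (Finset.mem_filter.1 hS₀F).2
  have hmin' : ∀ T : Finset ℤ, T ⊆ Finset.Icc (0:ℤ) Mz → IsSC α T →
      betaExit L R α S₀ ≤ betaExit L R α T := fun T h1 h2 =>
    hS₀min T (Finset.mem_filter.2 ⟨Finset.mem_powerset.2 h1, h2⟩)
  obtain ⟨⟨i0, hi0pos, hi0e⟩, hεlb⟩ := hε
  have hεpos : 0 < ε := hi0e ▸ hi0pos
  have hεR : ε ≤ α (R:ℤ) := hεlb ⟨(R:ℤ), hαR, rfl⟩
  have hεL : ε ≤ α (-(L:ℤ)) := hεlb ⟨-(L:ℤ), hαL, rfl⟩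
  have hR1 : (1:ℝ) ≤ (R:ℝ) := by exact_mod_cast hR
  have hL1 : (1:ℝ) ≤ (L:ℝ) := by exact_mod_cast hL
  have hdplus : ε ≤ dplus R α := by
    have h1 : (R:ℝ) * α (R:ℤ) ≤ dplus R α := by
      refine Finset.single_le_sum (f := fun i : ℤ => (i:ℝ) * α i) (fun i hi => ?_) ?_
      · have := (Finset.mem_Icc.1 hi).1
        exact mul_nonneg (by exact_mod_cast this.trans' (by norm_num)) (hα0 i)
      · exact Finset.mem_Icc.2 ⟨by exact_mod_cast hR, le_refl _⟩
    nlinarith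
  have hdminus : ε ≤ dminus L α := by
    have h1 : (L:ℝ) * α (-(L:ℤ)) ≤ dminus L α := by
      rw [dminus]
      have hmem : (-(L:ℤ)) ∈ Finset.Icc (-(L:ℤ)) (-1:ℤ) := Finset.mem_Icc.2 ⟨le_refl _, by omega⟩
      have h2 := Finset.single_le_sum (f := fun i : ℤ => |(i:ℝ)| * α i)
        (fun i _ => mul_nonneg (abs_nonneg _) (hα0 i)) hmem
      have h3 : |((-(L:ℤ) : ℤ) : ℝ)| = (L:ℝ) := by
        push_cast; rw [abs_neg, abs_of_nonneg (by linarith)]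
      simpa [h3] using h2
    nlinarith
  have hN2 : 2 ≤ N := by
    by_contra hcon
    push_neg at hcon
    have hN1 : (N:ℝ) ≤ 1 := by exact_mod_cast Nat.lt_succ_iff.mp hcon
    nlinarith
  have hm01 : 1 ≤ m₀ := le_trans (le_trans hL (le_max_left L R)) hm₀
  have hm0M : (m₀:ℤ) ≤ Mz := by
    have h : m₀ ≤ (N-1)*m₀ := Nat.le_mul_of_pos_left m₀ (by omega)
    rw [hMz]; exact_mod_cast h
  have hMzeq : Mz = ((N:ℤ) - 1) * (m₀:ℤ) := by
    rw [hMz]; push_cast [Nat.cast_sub (show 1 ≤ N by omega)]; ring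
  have key : ∀ S : Finset ℤ, IsSC α S → betaExit L R α S₀ ≤ betaExit L R α S := by
    intro S hS
    have hne := hS.1
    set a := S.min' hne with ha'
    set b := S.max' hne with hb'
    have haS : a ∈ S := S.min'_mem hne
    have hbS : b ∈ S := S.max'_mem hne
    by_cases hdiam : b - a ≤ Mz
    · rw [← betaExit_image_add L R α S (-a)]
      refine hmin' _ ?_ (isSC_image_add α S _ hS)
      intro y hy
      obtain ⟨x, hx, rfl⟩ := Finset.mem_image.1 hy
      have h2 := S.min'_le x hx
      have h3 := S.le_max' x hx
      rw [← ha'] at h2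
      rw [← hb'] at h3
      exact Finset.mem_Icc.2 ⟨by omega, by omega⟩
    · push_neg at hdiam
      have hIcc : Finset.Icc (0:ℤ) ((m₀:ℤ) - 1) ⊆ Finset.Icc (0:ℤ) Mz :=
        Finset.Icc_subset_Icc (le_refl _) (by omega)
      have hI_SC : IsSC α (Finset.Icc (0:ℤ) ((m₀:ℤ) - 1)) := by
        have := hm₀SC 0; rwa [zero_add] at this
      have hstep1 : betaExit L R α S₀ ≤ dminus L α + dplus R α :=
        le_trans (hmin' _ hIcc hI_SC) (beta_interval_le L R hL hR α hα0 0 _)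
      refine le_trans hstep1 ?_
      by_cases hfull : ∃ c : ℤ, Finset.Icc c (c + (m₀:ℤ) - 1) ⊆ S
      · obtain ⟨c, hc⟩ := hfull
        exact dd_le_beta L R m₀ hL hR hm₀ α hα0 S c hc
      · push_neg at hfull
        have hkey : ∀ k : Fin N, ∃ u : ℤ, u ∈ S ∧
            (a + (k:ℤ) * (m₀:ℤ) ≤ u ∧ u ≤ a + (k:ℤ) * (m₀:ℤ) + (m₀:ℤ) - 1) ∧
            ∃ i : ℤ, i ∈ Finset.Icc (-(L:ℤ)) (R:ℤ) ∧ u + i ∉ S ∧ ε ≤ α i := by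
          intro k
          set c := a + (k:ℤ) * (m₀:ℤ) with hcdef
          have hk0 : (0:ℤ) ≤ (k:ℤ) := by positivity
          have hkN : (k:ℤ) ≤ (N:ℤ) - 1 := by
            have := k.2
            have : (k:ℤ) < (N:ℤ) := by exact_mod_cast this
            omega
          have hcb : c ≤ b := by
            have h1 : (k:ℤ) * (m₀:ℤ) ≤ ((N:ℤ) - 1) * (m₀:ℤ) :=
              mul_le_mul_of_nonneg_right hkN (by positivity)
            rw [← hMzeq] at h1
            omega
          have hca : a ≤ c := by
            have : (0:ℤ) ≤ (k:ℤ) * (m₀:ℤ) := mul_nonneg hk0 (by positivity)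
            omega
          obtain ⟨x, hxS, hx1, hx2⟩ := reach_lemma L R m₀ α hsupp
            (le_trans (le_max_right L R) hm₀) hm01 S hS a b c haS hbS hca hcb
          obtain ⟨z', hz'B, hz'S⟩ := Finset.not_subset.1 (hfull c)
          have hxB : x ∈ Finset.Icc c (c + (m₀:ℤ) - 1) := Finset.mem_Icc.2 ⟨hx1, hx2⟩
          obtain ⟨u, v, huS, huB, hvB, hvS, hαuv⟩ :=
            exit_edge α _ S (hm₀SC c) x z' hxS hxB hz'B hz'S
          have huB' := Finset.mem_Icc.1 huB
          refine ⟨u, huS, ⟨huB'.1, huB'.2⟩, v - u, ?_, ?_, hεlb ⟨v - u, hαuv, rfl⟩⟩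
          · by_contra hcon
            rw [Finset.mem_Icc] at hcon
            have : α (v - u) = 0 := hsupp _ (by omega)
            rw [this] at hαuv
            exact lt_irrefl 0 hαuv
          · have hvu : u + (v - u) = v := by ring
            rw [hvu]; exact hvS
        choose u huS hub hrest using hkey
        choose iv hivIcc hivS hivε using hrest
        have hm01' : (1:ℤ) ≤ (m₀:ℤ) := by exact_mod_cast hm01
        have hinj : Function.Injective u := by
          intro k k' he
          by_contra hne
          have h1 := (hub k).1
          have h2 := (hub k).2
          have h1' := (hub k').1
          have h2' := (hub k').2
          rw [he] at h1 h2
          rcases Ne.lt_or_gt (fun h => hne (Fin.ext (by exact_mod_cast congrArg (Fin.val) h))) with h | h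
          · have hk1 : (k:ℤ) + 1 ≤ (k':ℤ) := by exact_mod_cast h
            have := mul_le_mul_of_nonneg_right hk1 (show (0:ℤ) ≤ (m₀:ℤ) by positivity)
            nlinarith
          · have hk1 : (k':ℤ) + 1 ≤ (k:ℤ) := by exact_mod_cast h
            have := mul_le_mul_of_nonneg_right hk1 (show (0:ℤ) ≤ (m₀:ℤ) by positivity)
            nlinarith
        have hsum : (N:ℝ) * ε ≤ betaExit L R α S := by
          unfold betaExit
          have step1 : ∀ k : Fin N, ε ≤ ∑ i ∈ Finset.Icc (-(L:ℤ)) (R:ℤ),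
              if u k + i ∉ S then α i else 0 := by
            intro k
            have hs := Finset.single_le_sum
              (f := fun i : ℤ => if u k + i ∉ S then α i else 0)
              (fun i _ => by split <;> simp [hα0]) (hivIcc k)
            exact le_trans (hivε k) (by simpa [hivS k] using hs)
          calc (N:ℝ) * ε = ∑ _k : Fin N, ε := by
                rw [Finset.sum_const, Finset.card_univ, Fintype.card_fin, nsmul_eq_mul]
            _ ≤ ∑ k : Fin N, ∑ i ∈ Finset.Icc (-(L:ℤ)) (R:ℤ),
                  if u k + i ∉ S then α i else 0 := Finset.sum_le_sum fun k _ => step1 k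
            _ = ∑ x ∈ Finset.univ.image u, ∑ i ∈ Finset.Icc (-(L:ℤ)) (R:ℤ),
                  if x + i ∉ S then α i else 0 := by
                rw [Finset.sum_image (fun p _ q _ h => hinj h)]
            _ ≤ ∑ x ∈ S, ∑ i ∈ Finset.Icc (-(L:ℤ)) (R:ℤ),
                  if x + i ∉ S then α i else 0 := by
                refine Finset.sum_le_sum_of_subset_of_nonneg ?_ ?_
                · intro x hx
                  obtain ⟨k, _, rfl⟩ := Finset.mem_image.1 hx
                  exact huS k
                · intro x _ _
                  exact Finset.sum_nonneg fun i _ => by split <;> simp [hα0]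
        exact le_trans (by linarith : dminus L α + dplus R α ≤ (N:ℝ) * ε) hsum
  have hmem : betaExit L R α S₀ ∈ {b : ℝ | ∃ S : Finset ℤ, IsSC α S ∧ betaExit L R α S = b} :=
    ⟨S₀, hS₀SC, rfl⟩
  have hlb : ∀ x ∈ {b : ℝ | ∃ S : Finset ℤ, IsSC α S ∧ betaExit L R α S = b},
      betaExit L R α S₀ ≤ x := by
    rintro x ⟨S, h1, rfl⟩
    exact key S h1
  have hk : kappa0 L R α = betaExit L R α S₀ :=
    le_antisymm (csInf_le ⟨_, hlb⟩ hmem) (le_csInf ⟨_, hmem⟩ hlb)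
  exact ⟨⟨S₀, hS₀SC, hk.symm⟩, ⟨S₀, hS₀sub, hS₀SC, hk.symm⟩⟩

end
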